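/- Let R be a nonzero complex polynomial and let n > 1, s > 0 be integers. If the polynomial X^s·R(X)^n is linearly equivalent to a power, i.e., there exist an integer N ≥ 1 and polynomials μ, ν of degree one such that X^s·R(X)^n = μ∘X^N∘ν, then R is a monomial: R = c·X^t for some c ∈ ℂ, c ≠ 0, and integer t ≥ 0. -/

import Mathlib

open Polynomial

theorem stmt_14 (R : Polynomial ℂ) (hR : R ≠ 0) (n s : ℕ) (hn : 1 < n) (hs : 0 < s)
    (h : ∃ (N : ℕ) (μ ν : Polynomial ℂ), 1 ≤ N ∧ μ.natDegree = 1 ∧ ν.natDegree = 1 ∧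
      X ^ s * R ^ n = μ.comp ((X ^ N : Polynomial ℂ).comp ν)) :
    ∃ (c : ℂ) (t : ℕ), c ≠ 0 ∧ R = C c * X ^ t := by
  obtain ⟨N, μ, ν, hN, hμ, hν, hF⟩ := h
  rw [pow_comp, X_comp] at hF
  by_cases ht0 : R.natDegree = 0
  · obtain ⟨c, rfl⟩ := natDegree_eq_zero.mp ht0
    refine ⟨c, 0, fun hc => hR (by simp [hc]), by simp⟩
  obtain ⟨a, ha, b, hab⟩ := natDegree_eq_one.mp hμ
  obtain ⟨p, hp, q, hpq⟩ := natDegree_eq_one.mp hν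
  set t := R.natDegree with htdef
  have ht : 1 ≤ t := Nat.one_le_iff_ne_zero.mpr ht0
  -- N = s + n * t
  have hXs : (X : Polynomial ℂ) ^ s ≠ 0 := pow_ne_zero _ X_ne_zero
  have hRn : R ^ n ≠ 0 := pow_ne_zero _ hR
  have hNst : N = s + n * t := by
    have h1 : (X ^ s * R ^ n).natDegree = s + n * t := by
      rw [natDegree_mul hXs hRn, natDegree_X_pow, natDegree_pow]
    have h2 : (μ.comp (ν ^ N)).natDegree = N := by
      rw [natDegree_comp, natDegree_pow, hμ, hν]; ring
    rw [hF, h2] at h1; omega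
  have hN2 : 2 ≤ N := by nlinarith
  -- derivative of F
  have hdμ : derivative μ = C a := by rw [← hab]; simp
  have hdν : derivative ν = C p := by rw [← hpq]; simp
  have hder : derivative (X ^ s * R ^ n) = C (a * p * N) * ν ^ (N - 1) := by
    rw [hF, derivative_comp, derivative_pow, hdμ, hdν, C_comp, map_mul, map_mul]
    ring
  -- every root of R is a root of ν
  have hroot : ∀ z : ℂ, R.eval z = 0 → ν.eval z = 0 := by
    intro z hz
    have h1 : eval z (derivative (X ^ s * R ^ n)) = 0 := by
      rw [derivative_mul]
      simp [derivative_pow, hz, zero_pow (by omega : n - 1 ≠ 0),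
        zero_pow (by omega : n ≠ 0)]
    rw [hder] at h1
    simp only [eval_mul, eval_C, eval_pow] at h1
    have hNz : (N : ℂ) ≠ 0 := Nat.cast_ne_zero.mpr (by omega)
    have h2 : eval z ν ^ (N - 1) = 0 := by
      rcases mul_eq_zero.mp h1 with h | h
      · exact absurd h (mul_ne_zero (mul_ne_zero ha hp) hNz)
      · exact h
    exact pow_eq_zero_iff (by omega : N - 1 ≠ 0) |>.mp h2
  -- R has a root
  obtain ⟨z, hz⟩ := Complex.exists_root (show 0 < R.degree by
    rw [degree_eq_natDegree hR]; exact_mod_cast ht)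
  have hzroot : R.eval z = 0 := hz
  have hνz : ν.eval z = 0 := hroot z hzroot
  -- b = 0
  have hb : b = 0 := by
    have h1 : eval z (X ^ s * R ^ n) = 0 := by
      simp [hzroot, zero_pow (by omega : n ≠ 0)]
    rw [hF] at h1
    rw [eval_comp, eval_pow, hνz, zero_pow (by omega : N ≠ 0), ← hab] at h1
    simpa using h1
  -- q = 0
  have hq : q = 0 := by
    have h1 : eval 0 (X ^ s * R ^ n) = 0 := by
      simp [zero_pow (by omega : s ≠ 0)]
    rw [hF, eval_comp, eval_pow, ← hab] at h1
    simp only [eval_add, eval_mul, eval_C, eval_X, hb, add_zero] at h1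
    have hν0 : eval 0 ν = q := by rw [← hpq]; simp
    rw [hν0] at h1
    rcases mul_eq_zero.mp h1 with h | h
    · exact absurd h ha
    · exact pow_eq_zero_iff (by omega : N ≠ 0) |>.mp h
  -- every root of R is 0
  have hallzero : ∀ w ∈ R.roots, w = 0 := by
    intro w hw
    have := hroot w ((mem_roots hR).mp hw)
    rw [← hpq, hq] at this
    simp at this
    tauto
  -- R = C lc * X ^ t
  have hcard : R.roots.card = t := by
    have := (splits_iff_card_roots (f := R)).mp (IsAlgClosed.splits R)
    omega
  have hrepl : R.roots = Multiset.replicate t 0 := by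
    rw [Multiset.eq_replicate]; exact ⟨hcard, hallzero⟩
  have hfact := C_leadingCoeff_mul_prod_multiset_X_sub_C (p := R) hcard
  rw [hrepl] at hfact
  refine ⟨R.leadingCoeff, t, leadingCoeff_ne_zero.mpr hR, ?_⟩
  rw [← hfact]
  simp [Multiset.map_replicate, Multiset.prod_replicate]
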